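/- In the setting of the recursive construction of τ for a Hermitian star product ⋆ on ℝ^n: if τ₀ = π* and τ₁,…,τ_{k−1} ∈ HC^1(C^∞(ℝ^n,ℂ), W) satisfy τ_i* = τ_i for all i (where φ*(f) := conj(φ(conj f))), then the cochain R_k(f,g) = Σ_{i=0}^{k−1} λ^{k−i} τ_i(C_{k−i}(f,g)) − Σ_{i=1}^{k−1} τ_i(f) ⋆_W τ_{k−i}(g) is Hermitian: R_k*(f,g) := conj(R_k(conj g, conj f)) = R_k(f,g). -/

import Mathlib

set_option synthInstance.maxHeartbeats 1000000
set_option maxHeartbeats 1000000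

open scoped BigOperators

noncomputable section

/-- The subalgebra of smooth complex-valued functions on `ℝⁿ`. -/
def smoothSubalgebra (n : ℕ) : Subalgebra ℂ ((Fin n → ℝ) → ℂ) where
  carrier := {f | ContDiff ℝ (⊤ : ℕ∞) f}
  mul_mem' hf hg := by simp only [Set.mem_setOf_eq] at *; exact hf.mul hg
  add_mem' hf hg := by simp only [Set.mem_setOf_eq] at *; exact hf.add hg
  algebraMap_mem' c := by
    show ContDiff ℝ (⊤ : ℕ∞) (fun _ => c)
    exact contDiff_const

/-- `C^∞(ℝⁿ, ℂ)` as a commutative `ℂ`-algebra. -/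
abbrev Cinf (n : ℕ) : Type := smoothSubalgebra n

theorem Cinf.smooth {n : ℕ} (f : Cinf n) : ContDiff ℝ (⊤ : ℕ∞) f.1 := f.2

/-- Complex conjugation as the `*`-involution on `C^∞(ℝⁿ, ℂ)`. -/
instance (n : ℕ) : StarRing (Cinf n) where
  star f := ⟨fun x => (starRingEnd ℂ) (f.1 x), by
    exact Complex.conjCLE.toContinuousLinearMap.contDiff.comp f.smooth⟩
  star_involutive f := Subtype.ext (funext fun x => by simp)
  star_mul f g := Subtype.ext (funext fun x => by
    simp only [MulMemClass.coe_mul, Pi.mul_apply, map_mul]; ring)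
  star_add f g := Subtype.ext (funext fun x => by
    simp only [AddMemClass.coe_add, Pi.add_apply, map_add])

/-- The partial derivative `∂/∂qᵏ` on smooth functions. -/
def pderivQ {n : ℕ} (k : Fin n) (f : Cinf n) : Cinf n :=
  ⟨fun x => fderiv ℝ f.1 x (Pi.single k 1), by
    exact (f.smooth.fderiv_right (m := (⊤ : ℕ∞)) (by norm_cast)).clm_apply contDiff_const⟩

/-- `W₀ = C^∞(ℝⁿ,ℂ)[[p₁,…,pₙ]]`. -/
abbrev W0 (n : ℕ) : Type := MvPowerSeries (Fin n) (Cinf n)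

/-- `W = W₀[[λ]]`. -/
abbrev Wf (n : ℕ) : Type := PowerSeries (W0 n)

/-- `∂/∂qᵏ` on `W₀`, acting on the smooth coefficients. -/
def Dq {n : ℕ} (k : Fin n) (a : W0 n) : W0 n := fun m => pderivQ k (a m)

/-- The formal partial derivative `∂/∂pₖ` on `W₀`. -/
def Dp {n : ℕ} (k : Fin n) (a : W0 n) : W0 n :=
  fun m => (m k + 1 : ℕ) • a (m + Finsupp.single k 1)

/-- The natural inclusion `π* : C^∞(ℝⁿ) → W₀`. -/
def piW0 {n : ℕ} (f : Cinf n) : W0 n := MvPowerSeries.C f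

/-- The natural inclusion `π* : C^∞(ℝⁿ) → W`. -/
def piW {n : ℕ} (f : Cinf n) : Wf n := PowerSeries.C (piW0 f)

/-- One factor of the bidifferential operator
`P = Σₖ (∂_{qᵏ} ⊗ ∂_{pₖ} − ∂_{pₖ} ⊗ ∂_{qᵏ})`: the derivative hitting the first
tensor factor (`true` records the summand `∂_{qᵏ} ⊗ ∂_{pₖ}`). -/
def fstDeriv {n : ℕ} : Fin n × Bool → W0 n → W0 n
  | (k, true) => Dq k
  | (k, false) => Dp k

/-- The derivative hitting the second tensor factor. -/
def sndDeriv {n : ℕ} : Fin n × Bool → W0 n → W0 n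
  | (k, true) => Dp k
  | (k, false) => Dq k

/-- The sign of each summand of `P`. -/
def pSign {n : ℕ} : Fin n × Bool → ℂ := fun kb => if kb.2 then 1 else -1

/-- Iterated application of the first-factor derivatives along a sequence `t`. -/
def iterFst {n r : ℕ} (t : Fin r → Fin n × Bool) (a : W0 n) : W0 n :=
  (List.ofFn t).foldr (fun kb x => fstDeriv kb x) a

/-- Iterated application of the second-factor derivatives along a sequence `t`. -/
def iterSnd {n r : ℕ} (t : Fin r → Fin n × Bool) (a : W0 n) : W0 n :=
  (List.ofFn t).foldr (fun kb x => sndDeriv kb x) a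

/-- `μ ∘ Pʳ (a ⊗ b)`: the `r`-th power of the Poisson bidifferential operator
`P = Σₖ (∂_{qᵏ} ⊗ ∂_{pₖ} − ∂_{pₖ} ⊗ ∂_{qᵏ})` followed by the (undeformed)
multiplication `μ`. -/
def moyalP {n : ℕ} (r : ℕ) (a b : W0 n) : W0 n :=
  ∑ t : Fin r → Fin n × Bool,
    (∏ j, pSign (t j)) • (iterFst t a * iterSnd t b)

/-- The formal Weyl–Moyal star product
`a ⋆_W b = μ ∘ exp((iλ/2) Σₖ (∂_{qᵏ} ⊗ ∂_{pₖ} − ∂_{pₖ} ⊗ ∂_{qᵏ}))(a ⊗ b)`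
on `W = W₀[[λ]]`. -/
def weylMul {n : ℕ} (a b : Wf n) : Wf n :=
  PowerSeries.mk fun ℓ => ∑ p ∈ Finset.HasAntidiagonal.antidiagonal ℓ, ∑ q ∈ Finset.HasAntidiagonal.antidiagonal p.2,
    ((Complex.I / 2) ^ p.1 / (p.1.factorial : ℂ)) •
      moyalP p.1 (PowerSeries.coeff q.1 a) (PowerSeries.coeff q.2 b)

/-- Complex conjugation on `W₀` (the formal variables `p` are treated as real). -/
def starW0 {n : ℕ} (a : W0 n) : W0 n := fun m => star (a m)

/-- Complex conjugation on `W = W₀[[λ]]` (`λ` and the `p`'s are treated as real). -/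
def starWf {n : ℕ} (w : Wf n) : Wf n :=
  PowerSeries.mk fun ℓ => starW0 (PowerSeries.coeff ℓ w)

/-- The classical limit `cl : W → W₀`, setting `λ = 0`. -/
def clW {n : ℕ} (w : Wf n) : W0 n := PowerSeries.coeff 0 w

/-- The action of a formal series `c ∈ ℂ[[λ]]` on `W`, making `W` a
`ℂ[[λ]]`-module (the element `c(λ)·1` is central, so deformed and undeformed
multiplication by it agree). -/
def lamSmulW {n : ℕ} (c : PowerSeries ℂ) (w : Wf n) : Wf n :=
  PowerSeries.map (algebraMap ℂ (W0 n)) c * w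

/-- The action of `c ∈ ℂ[[λ]]` on `C^∞(ℝⁿ)[[λ]]`. -/
def lamSmulS {n : ℕ} (c : PowerSeries ℂ) (g : PowerSeries (Cinf n)) : PowerSeries (Cinf n) :=
  PowerSeries.map (algebraMap ℂ (Cinf n)) c * g

end
/-! ### Generic algebraic notions: differential operators, Hochschild cochains,
formal deformations and positive functionals. -/

/-- Grothendieck's algebraic notion of a differential operator of order at most `k`
from a commutative ring `A` to a module `M`, with the action of `A` on `M` given
explicitly by `sm`.  An operator of order `≤ 0` is a module map, and `D` has order
`≤ k+1` if all the commutators `[D, a]` have order `≤ k`. -/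
def IsDiffOpLE {A : Type*} [CommRing A] {M : Type*} [AddCommGroup M]
    (sm : A → M → M) : ℕ → (A → M) → Prop
  | 0 => fun D => ∀ a x, D (a * x) = sm a (D x)
  | (k+1) => fun D => ∀ a, IsDiffOpLE sm k fun x => D (a * x) - sm a (D x)

/-- `D : A → M` is a differential operator if it has some finite order. -/
def IsDiffOp {A : Type*} [CommRing A] {M : Type*} [AddCommGroup M]
    (sm : A → M → M) (D : A → M) : Prop :=
  ∃ k, IsDiffOpLE sm k D

/-- The tuple obtained from `f : Fin (k+1) → A` by multiplying the `i`-th and the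
`(i+1)`-st entries. -/
def mergeAt {A : Type*} [Mul A] {k : ℕ} (f : Fin (k + 1) → A) (i : Fin k) : Fin k → A :=
  fun j =>
    if (j : ℕ) < (i : ℕ) then f j.castSucc
    else if (j : ℕ) = (i : ℕ) then f i.castSucc * f i.succ
    else f j.succ

/-- The Hochschild coboundary operator on `k`-cochains of a commutative ring `A` with
values in an `(A,A)`-bimodule `M`, whose left and right actions are given explicitly by
`L` and `R`:
`(δφ)(f₀,…,f_k) = f₀·φ(f₁,…,f_k) + Σᵢ (−1)^{i+1} φ(f₀,…,fᵢfᵢ₊₁,…,f_k) + (−1)^{k+1} φ(f₀,…,f_{k−1})·f_k`. -/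
def hDelta {A : Type*} [CommRing A] {M : Type*} [AddCommGroup M]
    (L : A → M → M) (R : M → A → M) {k : ℕ} (φ : (Fin k → A) → M) :
    (Fin (k + 1) → A) → M := fun f =>
  L (f 0) (φ fun i => f i.succ)
    + ∑ i : Fin k, (-1 : ℤ) ^ ((i : ℕ) + 1) • φ (mergeAt f i)
    + (-1 : ℤ) ^ (k + 1) • R (φ fun i => f i.castSucc) (f (Fin.last k))

/-- A `k`-multilinear cochain (over `ℂ`). -/
def IsMultilinC {A : Type*} [CommRing A] [Algebra ℂ A] {M : Type*} [AddCommGroup M]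
    [Module ℂ M] {k : ℕ} (φ : (Fin k → A) → M) : Prop :=
  (∀ (f : Fin k → A) (i : Fin k) (x y : A),
      φ (Function.update f i (x + y)) = φ (Function.update f i x) + φ (Function.update f i y)) ∧
  (∀ (f : Fin k → A) (i : Fin k) (c : ℂ) (x : A),
      φ (Function.update f i (c • x)) = c • φ (Function.update f i x))

/-- The total antisymmetrization operator on `k`-cochains. -/
noncomputable def altC {A : Type*} {M : Type*} [AddCommGroup M] [Module ℂ M] {k : ℕ}
    (φ : (Fin k → A) → M) : (Fin k → A) → M := fun f =>
  (k.factorial : ℂ)⁻¹ • ∑ σ : Equiv.Perm (Fin k), ((Equiv.Perm.sign σ : ℤ)) • φ (f ∘ σ)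

/-- The formal deformation `F ⋆ G = Σₙ λⁿ Σ_{r+i+j=n} C_r(F_i, G_j)` of an algebra `A`
determined by a family of "cochains" `C_r : A × A → A`, where `C_0` is meant to be the
undeformed product.  This is the general form of a star product. -/
noncomputable def starMulC {A : Type*} [Ring A] (C : ℕ → A → A → A) (F G : PowerSeries A) :
    PowerSeries A :=
  PowerSeries.mk fun ℓ => ∑ p ∈ Finset.HasAntidiagonal.antidiagonal ℓ, ∑ q ∈ Finset.HasAntidiagonal.antidiagonal p.2,
    C p.1 (PowerSeries.coeff q.1 F) (PowerSeries.coeff q.2 G)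

/-- The coefficientwise involution on `A[[λ]]` (the formal parameter `λ` is real). -/
noncomputable def starSeries {A : Type*} [Semiring A] [Star A] (F : PowerSeries A) :
    PowerSeries A :=
  PowerSeries.mk fun ℓ => star (PowerSeries.coeff ℓ F)

/-- `C` is a (bidifferential) star product on the commutative `ℂ`-algebra `A`:
`C_0` is the pointwise product, each `C_r` is `ℂ`-bilinear and a differential operator
in each argument, and the total product on `A[[λ]]` is associative. -/
structure IsStarProduct (A : Type*) [CommRing A] [Algebra ℂ A] (C : ℕ → A → A → A) :
    Prop where
  C_zero : ∀ f g, C 0 f g = f * g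
  add_left : ∀ r f f' g, C r (f + f') g = C r f g + C r f' g
  add_right : ∀ r f g g', C r f (g + g') = C r f g + C r f g'
  smul_left : ∀ (r : ℕ) (c : ℂ) f g, C r (c • f) g = c • C r f g
  smul_right : ∀ (r : ℕ) (c : ℂ) f g, C r f (c • g) = c • C r f g
  diff_left : ∀ r g, IsDiffOp (· * ·) fun f => C r f g
  diff_right : ∀ r f, IsDiffOp (· * ·) fun g => C r f g
  assoc : ∀ F G H, starMulC C (starMulC C F G) H = starMulC C F (starMulC C G H)

/-- `P` is a Poisson bracket on the commutative `ℂ`-algebra `A`. -/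
structure IsPoissonBracket (A : Type*) [CommRing A] [Algebra ℂ A] (P : A → A → A) :
    Prop where
  antisymm : ∀ f g, P f g = - P g f
  add_left : ∀ f f' g, P (f + f') g = P f g + P f' g
  smul_left : ∀ (c : ℂ) f g, P (c • f) g = c • P f g
  leibniz : ∀ f g h, P f (g * h) = P f g * h + g * P f h
  jacobi : ∀ f g h, P f (P g h) + P g (P h f) + P h (P f g) = 0

/-- The star product `C` quantizes the Poisson bracket `P`:
`C₁(f,g) − C₁(g,f) = i {f, g}`. -/
def QuantizesPB {A : Type*} [CommRing A] [Algebra ℂ A] (C : ℕ → A → A → A)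
    (P : A → A → A) : Prop :=
  ∀ f g, C 1 f g - C 1 g f = Complex.I • P f g

/-- The star product `C` is Hermitian: `conj (F ⋆ G) = (conj G) ⋆ (conj F)`. -/
def IsHermitianSP {A : Type*} [Ring A] [Star A] (C : ℕ → A → A → A) : Prop :=
  ∀ F G, starSeries (starMulC C F G) = starMulC C (starSeries G) (starSeries F)

/-- The `ℂ[[λ]]`-linear functional `ω = Σᵣ λʳ ωᵣ : A[[λ]] → ℂ[[λ]]` determined by a
family of `ℂ`-linear functionals `ωᵣ : A → ℂ`. -/
noncomputable def extFun {A : Type*} [Ring A] [Module ℂ A] (ω : ℕ → A →ₗ[ℂ] ℂ)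
    (F : PowerSeries A) : PowerSeries ℂ :=
  PowerSeries.mk fun ℓ => ∑ q ∈ Finset.HasAntidiagonal.antidiagonal ℓ, ω q.1 (PowerSeries.coeff q.2 F)

/-- `s ≥ 0` in `ℝ[[λ]] ⊂ ℂ[[λ]]`: all coefficients of `s` are real and `s` is either zero
or its lowest non-vanishing coefficient is positive.  This is the ring ordering of
`ℝ[[λ]]` in which `λ` is positive and infinitesimally small. -/
def IsNonnegSeries (s : PowerSeries ℂ) : Prop :=
  (∀ m, (PowerSeries.coeff m s).im = 0) ∧
    (s = 0 ∨ ∃ N, (∀ m, m < N → PowerSeries.coeff m s = 0) ∧ 0 < (PowerSeries.coeff N s).re)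

/-- The entrywise extension of a family `C_r` of cochains on `A` to matrices,
`(C_r(X,Y))_{ij} = Σ_l C_r(X_{il}, Y_{lj})`. -/
noncomputable def matC {A : Type*} [Ring A] (N : ℕ) (C : ℕ → A → A → A) :
    ℕ → Matrix (Fin N) (Fin N) A → Matrix (Fin N) (Fin N) A → Matrix (Fin N) (Fin N) A :=
  fun r X Y i j => ∑ l, C r (X i l) (Y l j)
/-! ### The bimodule structures on `W` and `W₀`, the degree map, and related notions. -/

/-- Left action of `C^∞(ℝⁿ)` on `W` by `⋆_W`-multiplication with `π*(f)`. -/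
noncomputable def Lw {n : ℕ} (f : Cinf n) (w : Wf n) : Wf n := weylMul (piW f) w

/-- Right action of `C^∞(ℝⁿ)` on `W` by `⋆_W`-multiplication with `π*(f)`. -/
noncomputable def Rw {n : ℕ} (w : Wf n) (f : Cinf n) : Wf n := weylMul w (piW f)

/-- The pointwise (undeformed) action of `C^∞(ℝⁿ)` on `W`. -/
noncomputable def ptSmulW {n : ℕ} (f : Cinf n) (w : Wf n) : Wf n := piW f * w

/-- The pointwise left action of `C^∞(ℝⁿ)` on `W₀`. -/
noncomputable def L0 {n : ℕ} (f : Cinf n) (b : W0 n) : W0 n := piW0 f * b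

/-- The pointwise right action of `C^∞(ℝⁿ)` on `W₀`. -/
noncomputable def R0 {n : ℕ} (b : W0 n) (f : Cinf n) : W0 n := b * piW0 f

/-- A `W`-valued cochain is differential if it is a differential operator in each
argument. -/
def IsDiffCochainW {n k : ℕ} (φ : (Fin k → Cinf n) → Wf n) : Prop :=
  ∀ (f : Fin k → Cinf n) (i : Fin k), IsDiffOp ptSmulW fun x => φ (Function.update f i x)

/-- A `W₀`-valued cochain is differential if it is a differential operator in each
argument. -/
def IsDiffCochain0 {n k : ℕ} (φ : (Fin k → Cinf n) → W0 n) : Prop :=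
  ∀ (f : Fin k → Cinf n) (i : Fin k), IsDiffOp L0 fun x => φ (Function.update f i x)

/-- The involution `φ ↦ φ*` on `W`-valued Hochschild cochains,
`φ*(f₁,…,f_r) = conj (φ (conj f_r, …, conj f₁))`. -/
noncomputable def cochainStar {n r : ℕ} (φ : (Fin r → Cinf n) → Wf n) :
    (Fin r → Cinf n) → Wf n := fun f =>
  starWf (φ fun i => star (f i.rev))

/-- The Euler operator `Σᵢ pᵢ ∂/∂pᵢ` on `W₀`. -/
noncomputable def pEuler {n : ℕ} (b : W0 n) : W0 n :=
  ∑ i : Fin n, MvPowerSeries.X i * Dp i b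

/-- The degree map `deg = Σᵢ pᵢ ∂/∂pᵢ + λ ∂/∂λ` on `W`. -/
noncomputable def degW {n : ℕ} (w : Wf n) : Wf n :=
  PowerSeries.mk fun ℓ =>
    ℓ • PowerSeries.coeff ℓ w + pEuler (PowerSeries.coeff ℓ w)

/-- `w ∈ W` is homogeneous of degree `k` with respect to `deg`. -/
def IsDegHomogElem {n : ℕ} (k : ℕ) (w : Wf n) : Prop := degW w = k • w

/-- A map `τ : C^∞(ℝⁿ) → W` is homogeneous of degree `k` with respect to `deg`. -/
def IsDegHomog {n : ℕ} (k : ℕ) (τ : Cinf n → Wf n) : Prop :=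
  ∀ f, degW (τ f) = k • τ f

/-- `τ : C^∞(ℝⁿ) → W` is an element of `HC¹(C^∞(ℝⁿ), W)`: it is `ℂ`-linear and a
differential operator. -/
def IsHC1 {n : ℕ} (τ : Cinf n → Wf n) : Prop :=
  (∀ f g, τ (f + g) = τ f + τ g) ∧ (∀ (c : ℂ) (f : Cinf n), τ (c • f) = c • τ f) ∧
    IsDiffOp ptSmulW τ

/-- `w ∈ W` lies in the part of `deg`-degree at least `N` (all components of total
degree `< N` in the `pᵢ` and `λ` vanish).  Used to express convergence of the series
`Σₖ τₖ` in the `deg`-adic topology. -/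
def degOrderGE {n : ℕ} (N : ℕ) (w : Wf n) : Prop :=
  ∀ (ℓ : ℕ) (m : Fin n →₀ ℕ),
    (m.sum fun _ e => e) + ℓ < N → PowerSeries.coeff ℓ w m = 0

/-- The component of `w ∈ W` of `deg`-degree exactly `d`. -/
noncomputable def degComp {n : ℕ} (d : ℕ) (w : Wf n) : Wf n :=
  PowerSeries.mk fun ℓ =>
    (fun m => if (m.sum fun _ e => e) + ℓ = d then PowerSeries.coeff ℓ w m else 0 :
      W0 n)

/-- The `λ`-linear extension of the finite sum `τ₀ + ⋯ + τ_{k−1}` to a map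
`C^∞(ℝⁿ)[[λ]] → W`. -/
noncomputable def extSum {n : ℕ} (τ : ℕ → Cinf n → Wf n) (k : ℕ)
    (F : PowerSeries (Cinf n)) : Wf n :=
  PowerSeries.mk fun ℓ => ∑ q ∈ Finset.HasAntidiagonal.antidiagonal ℓ, ∑ i ∈ Finset.range k,
    PowerSeries.coeff q.1 (τ i (PowerSeries.coeff q.2 F))

/-- The `λ`-linear (that is, `ℂ[[λ]]`-linear) extension
`π* : C^∞(ℝⁿ)[[λ]] → W` of the natural inclusion. -/
noncomputable def piHat {n : ℕ} (F : PowerSeries (Cinf n)) : Wf n :=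
  PowerSeries.map (MvPowerSeries.C : Cinf n →+* W0 n) F

/-- The canonical Poisson bracket `{a,b} = Σₖ (∂a/∂qᵏ ∂b/∂pₖ − ∂a/∂pₖ ∂b/∂qᵏ)` on the
formal cotangent bundle, i.e. on `W₀`. -/
noncomputable def pbCan {n : ℕ} (a b : W0 n) : W0 n :=
  ∑ k : Fin n, (Dq k a * Dp k b - Dp k a * Dq k b)

/-- The cochain
`R_k(f,g) = Σ_{i=0}^{k−1} λ^{k−i} τ_i(C_{k−i}(f,g)) − Σ_{i=1}^{k−1} τ_i(f) ⋆_W τ_{k−i}(g)`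
appearing in the recursive construction of `τ`. -/
noncomputable def Rcochain {n : ℕ} (C : ℕ → Cinf n → Cinf n → Cinf n)
    (τ : ℕ → Cinf n → Wf n) (k : ℕ) (f g : Cinf n) : Wf n :=
  (∑ i ∈ Finset.range k, lamSmulW (PowerSeries.X ^ (k - i)) (τ i (C (k - i) f g)))
    - ∑ i ∈ Finset.Ioo 0 k, weylMul (τ i f) (τ (k - i) g)

namespace RkAux
variable {n : ℕ}

lemma starCinf_coe (f : Cinf n) (x : Fin n → ℝ) :
    (star f : Cinf n).1 x = (starRingEnd ℂ) (f.1 x) := rfl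

lemma star_smulC (c : ℂ) (f : Cinf n) : star (c • f) = (starRingEnd ℂ c) • star f := by
  apply Subtype.ext; funext x
  show (starRingEnd ℂ) ((c • f).1 x) = ((starRingEnd ℂ c) • star f).1 x
  simp [starCinf_coe]

lemma sW0_apply (a : W0 n) (m : Fin n →₀ ℕ) : starW0 a m = star (a m) := rfl

lemma sW0_add (a b : W0 n) : starW0 (a + b) = starW0 a + starW0 b := by
  funext m; exact star_add _ _

lemma sW0_zero : starW0 (0 : W0 n) = 0 := by funext m; exact star_zero _

lemma sW0_sub (a b : W0 n) : starW0 (a - b) = starW0 a - starW0 b := by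
  funext m; exact star_sub _ _

lemma sW0_sum {ι : Type*} (s : Finset ι) (F : ι → W0 n) :
    starW0 (∑ i ∈ s, F i) = ∑ i ∈ s, starW0 (F i) := by
  funext m
  show star (MvPowerSeries.coeff m (∑ i ∈ s, F i)) = MvPowerSeries.coeff m (∑ i ∈ s, starW0 (F i))
  rw [map_sum, map_sum, star_sum]
  rfl

lemma sW0_smul (c : ℂ) (a : W0 n) : starW0 (c • a) = (starRingEnd ℂ c) • starW0 a := by
  funext m
  show star (c • a m) = (starRingEnd ℂ c) • star (a m)
  rw [star_smulC]

lemma sW0_mul (a b : W0 n) : starW0 (a * b) = starW0 a * starW0 b := by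
  funext m
  show star (MvPowerSeries.coeff m (a * b))
    = MvPowerSeries.coeff m (starW0 a * starW0 b)
  rw [MvPowerSeries.coeff_mul, MvPowerSeries.coeff_mul, star_sum]
  refine Finset.sum_congr rfl fun p _ => ?_
  rw [star_mul']
  rfl

lemma sW0_one : starW0 (1 : W0 n) = 1 := by
  funext m
  show star (MvPowerSeries.coeff m 1) = MvPowerSeries.coeff m 1
  rw [MvPowerSeries.coeff_one]
  split <;> simp

lemma star_pderivQ (k : Fin n) (f : Cinf n) :
    star (pderivQ k f) = pderivQ k (star f) := by
  apply Subtype.ext; funext x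
  show (starRingEnd ℂ) ((pderivQ k f).1 x) = (pderivQ k (star f)).1 x
  show (starRingEnd ℂ) (fderiv ℝ f.1 x (Pi.single k 1))
    = fderiv ℝ (star f : Cinf n).1 x (Pi.single k 1)
  have hd : DifferentiableAt ℝ f.1 x :=
    (f.smooth.differentiable (by norm_cast)).differentiableAt
  have h : fderiv ℝ (⇑Complex.conjCLE.toContinuousLinearMap ∘ f.1) x
      = Complex.conjCLE.toContinuousLinearMap.comp (fderiv ℝ f.1 x) := by
    rw [fderiv_comp x Complex.conjCLE.toContinuousLinearMap.differentiableAt hd,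
      ContinuousLinearMap.fderiv]
  have h2 := congrArg (fun L => L (Pi.single k (1:ℝ))) h
  have h3 : (star f : Cinf n).1 = ⇑Complex.conjCLE.toContinuousLinearMap ∘ f.1 := by
    funext y; rfl
  rw [h3]
  simpa [Function.comp] using h2.symm

lemma sW0_Dq (k : Fin n) (a : W0 n) : starW0 (Dq k a) = Dq k (starW0 a) := by
  funext m
  show star (pderivQ k (a m)) = pderivQ k (star (a m))
  exact star_pderivQ k (a m)

lemma sW0_Dp (k : Fin n) (a : W0 n) : starW0 (Dp k a) = Dp k (starW0 a) := by
  funext m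
  show star ((m k + 1 : ℕ) • a (m + Finsupp.single k 1)) = (m k + 1 : ℕ) • star (a (m + Finsupp.single k 1))
  exact star_nsmul _ _

lemma sW0_fstDeriv (kb : Fin n × Bool) (a : W0 n) :
    starW0 (fstDeriv kb a) = fstDeriv kb (starW0 a) := by
  obtain ⟨k, b⟩ := kb; cases b
  · exact sW0_Dp k a
  · exact sW0_Dq k a

lemma sW0_sndDeriv (kb : Fin n × Bool) (a : W0 n) :
    starW0 (sndDeriv kb a) = sndDeriv kb (starW0 a) := by
  obtain ⟨k, b⟩ := kb; cases b
  · exact sW0_Dq k a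
  · exact sW0_Dp k a

lemma sW0_foldr_fst (l : List (Fin n × Bool)) (a : W0 n) :
    starW0 (l.foldr (fun kb x => fstDeriv kb x) a)
      = l.foldr (fun kb x => fstDeriv kb x) (starW0 a) := by
  induction l with
  | nil => rfl
  | cons kb l ih => simp only [List.foldr_cons, sW0_fstDeriv, ih]

lemma sW0_foldr_snd (l : List (Fin n × Bool)) (a : W0 n) :
    starW0 (l.foldr (fun kb x => sndDeriv kb x) a)
      = l.foldr (fun kb x => sndDeriv kb x) (starW0 a) := by
  induction l with
  | nil => rfl
  | cons kb l ih => simp only [List.foldr_cons, sW0_sndDeriv, ih]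

/-- flip the Bool component -/
def flip1 {n : ℕ} : Fin n × Bool → Fin n × Bool := fun kb => (kb.1, !kb.2)

lemma fstDeriv_flip (kb : Fin n × Bool) : fstDeriv (flip1 kb) = (sndDeriv kb : W0 n → W0 n) := by
  obtain ⟨k, b⟩ := kb; cases b <;> rfl

lemma sndDeriv_flip (kb : Fin n × Bool) : sndDeriv (flip1 kb) = (fstDeriv kb : W0 n → W0 n) := by
  obtain ⟨k, b⟩ := kb; cases b <;> rfl

lemma pSign_flip (kb : Fin n × Bool) : pSign (flip1 kb) = - pSign kb := by
  obtain ⟨k, b⟩ := kb; cases b <;> simp [pSign, flip1]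

lemma foldr_map_flip_fst (l : List (Fin n × Bool)) (a : W0 n) :
    (l.map flip1).foldr (fun kb x => fstDeriv kb x) a
      = l.foldr (fun kb x => sndDeriv kb x) a := by
  induction l with
  | nil => rfl
  | cons kb l ih => simp only [List.map_cons, List.foldr_cons, ih, fstDeriv_flip]

lemma foldr_map_flip_snd (l : List (Fin n × Bool)) (a : W0 n) :
    (l.map flip1).foldr (fun kb x => sndDeriv kb x) a
      = l.foldr (fun kb x => fstDeriv kb x) a := by
  induction l with
  | nil => rfl
  | cons kb l ih => simp only [List.map_cons, List.foldr_cons, ih, sndDeriv_flip]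

lemma iterFst_flip {r : ℕ} (t : Fin r → Fin n × Bool) (a : W0 n) :
    iterFst (fun j => flip1 (t j)) a = iterSnd t a := by
  unfold iterFst iterSnd
  rw [show List.ofFn (fun j => flip1 (t j)) = (List.ofFn t).map flip1 from
    (List.map_ofFn (f := t) (g := flip1)).symm]
  exact foldr_map_flip_fst _ _

lemma iterSnd_flip {r : ℕ} (t : Fin r → Fin n × Bool) (a : W0 n) :
    iterSnd (fun j => flip1 (t j)) a = iterFst t a := by
  unfold iterFst iterSnd
  rw [show List.ofFn (fun j => flip1 (t j)) = (List.ofFn t).map flip1 from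
    (List.map_ofFn (f := t) (g := flip1)).symm]
  exact foldr_map_flip_snd _ _

lemma sW0_iterFst {r : ℕ} (t : Fin r → Fin n × Bool) (a : W0 n) :
    starW0 (iterFst t a) = iterFst t (starW0 a) := sW0_foldr_fst _ _

lemma sW0_iterSnd {r : ℕ} (t : Fin r → Fin n × Bool) (a : W0 n) :
    starW0 (iterSnd t a) = iterSnd t (starW0 a) := sW0_foldr_snd _ _

lemma sW0_moyalP (r : ℕ) (a b : W0 n) :
    starW0 (moyalP r a b) = moyalP r (starW0 a) (starW0 b) := by
  unfold moyalP
  rw [sW0_sum]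
  refine Finset.sum_congr rfl fun t _ => ?_
  rw [sW0_smul, sW0_mul, sW0_iterFst, sW0_iterSnd]
  congr 1
  rw [map_prod]
  refine Finset.prod_congr rfl fun j _ => ?_
  obtain ⟨k, b'⟩ := t j; cases b' <;> simp [pSign]

/-- involutive equiv flipping all bools -/
def flipEquiv (r : ℕ) : (Fin r → Fin n × Bool) ≃ (Fin r → Fin n × Bool) where
  toFun t := fun j => flip1 (t j)
  invFun t := fun j => flip1 (t j)
  left_inv t := by funext j; simp [flip1]
  right_inv t := by funext j; simp [flip1]

lemma moyalP_swap (r : ℕ) (a b : W0 n) :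
    moyalP r b a = ((-1 : ℂ) ^ r) • moyalP r a b := by
  unfold moyalP
  rw [Finset.smul_sum]
  rw [← Equiv.sum_comp (flipEquiv (n := n) r)]
  refine Finset.sum_congr rfl fun t _ => ?_
  show (∏ j, pSign (flip1 (t j))) • (iterFst (fun j => flip1 (t j)) b
      * iterSnd (fun j => flip1 (t j)) a)
    = ((-1 : ℂ) ^ r) • (∏ j, pSign (t j)) • (iterFst t a * iterSnd t b)
  rw [iterFst_flip, iterSnd_flip]
  have hp : (∏ j, pSign (flip1 (t j))) = ((-1 : ℂ) ^ r) * ∏ j, pSign (t j) := by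
    simp only [pSign_flip]
    calc (∏ j, -pSign (t j) : ℂ) = ∏ j, ((-1) * pSign (t j)) := by
          refine Finset.prod_congr rfl fun j _ => by ring
      _ = (∏ _j : Fin r, (-1 : ℂ)) * ∏ j, pSign (t j) := Finset.prod_mul_distrib
      _ = ((-1 : ℂ) ^ r) * ∏ j, pSign (t j) := by
          rw [Finset.prod_const, Finset.card_univ, Fintype.card_fin]
  rw [hp, mul_smul]
  congr 1
  rw [mul_comm]

lemma coeff_starWf (ℓ : ℕ) (w : Wf n) :
    PowerSeries.coeff ℓ (starWf w) = starW0 (PowerSeries.coeff ℓ w) :=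
  PowerSeries.coeff_mk _ _

lemma sWf_sub (a b : Wf n) : starWf (a - b) = starWf a - starWf b := by
  refine PowerSeries.ext fun ℓ => ?_
  simp only [map_sub, coeff_starWf, sW0_sub]

lemma sWf_sum {ι : Type*} (s : Finset ι) (F : ι → Wf n) :
    starWf (∑ i ∈ s, F i) = ∑ i ∈ s, starWf (F i) := by
  refine PowerSeries.ext fun ℓ => ?_
  simp only [map_sum, coeff_starWf, sW0_sum]

lemma sWf_mul (a b : Wf n) : starWf (a * b) = starWf a * starWf b := by
  refine PowerSeries.ext fun ℓ => ?_
  simp only [coeff_starWf, PowerSeries.coeff_mul, sW0_sum, sW0_mul]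

lemma sWf_X_pow (m : ℕ) : starWf ((PowerSeries.X : Wf n) ^ m) = PowerSeries.X ^ m := by
  refine PowerSeries.ext fun ℓ => ?_
  rw [coeff_starWf, PowerSeries.coeff_X_pow]
  split
  · exact sW0_one
  · exact sW0_zero

lemma sWf_lamSmul_X_pow (m : ℕ) (w : Wf n) :
    starWf (lamSmulW (PowerSeries.X ^ m) w) = lamSmulW (PowerSeries.X ^ m) (starWf w) := by
  unfold lamSmulW
  rw [map_pow, PowerSeries.map_X, sWf_mul, sWf_X_pow]

lemma conj_weyl_scalar (m : ℕ) :
    (starRingEnd ℂ) ((Complex.I / 2) ^ m / (m.factorial : ℂ)) * (-1 : ℂ) ^ m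
      = (Complex.I / 2) ^ m / (m.factorial : ℂ) := by
  have h : (starRingEnd ℂ) (Complex.I / 2) = -(Complex.I / 2) := by
    have : (starRingEnd ℂ) (2 : ℂ) = 2 := by
      simp [Complex.ext_iff]
    simp [map_div₀, Complex.conj_I, neg_div, this]
  have h2 : (starRingEnd ℂ) ((m.factorial : ℂ)) = (m.factorial : ℂ) := by simp
  have key : ((-1 : ℂ)) ^ m * (-1 : ℂ) ^ m = 1 := by rw [← mul_pow]; norm_num
  rw [map_div₀, map_pow, h, h2, neg_pow]
  calc ((-1 : ℂ) ^ m * (Complex.I / 2) ^ m) / (m.factorial : ℂ) * (-1) ^ m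
      = ((-1 : ℂ) ^ m * (-1) ^ m) * ((Complex.I / 2) ^ m / (m.factorial : ℂ)) := by ring
    _ = (Complex.I / 2) ^ m / (m.factorial : ℂ) := by rw [key, one_mul]

lemma sum_antidiag_swap {M : Type*} [AddCommMonoid M] (m : ℕ) (f : ℕ × ℕ → M) :
    ∑ q ∈ Finset.HasAntidiagonal.antidiagonal m, f q.swap = ∑ q ∈ Finset.HasAntidiagonal.antidiagonal m, f q := by
  conv_rhs => rw [← Finset.HasAntidiagonal.map_swap_antidiagonal (n := m)]
  rw [Finset.sum_map]
  rfl

lemma sWf_weylMul (a b : Wf n) :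
    starWf (weylMul a b) = weylMul (starWf b) (starWf a) := by
  refine PowerSeries.ext fun ℓ => ?_
  rw [coeff_starWf]
  unfold weylMul
  rw [PowerSeries.coeff_mk, PowerSeries.coeff_mk, sW0_sum]
  refine Finset.sum_congr rfl fun p _ => ?_
  rw [sW0_sum]
  rw [← sum_antidiag_swap p.2 (fun q => ((Complex.I / 2) ^ p.1 / (p.1.factorial : ℂ)) •
      moyalP p.1 (PowerSeries.coeff q.1 (starWf b)) (PowerSeries.coeff q.2 (starWf a)))]
  refine Finset.sum_congr rfl fun q _ => ?_
  rw [sW0_smul, sW0_moyalP]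
  show (starRingEnd ℂ) ((Complex.I / 2) ^ p.1 / (p.1.factorial : ℂ)) •
      moyalP p.1 (starW0 (PowerSeries.coeff q.1 a)) (starW0 (PowerSeries.coeff q.2 b))
    = ((Complex.I / 2) ^ p.1 / (p.1.factorial : ℂ)) •
      moyalP p.1 (PowerSeries.coeff q.2 (starWf b)) (PowerSeries.coeff q.1 (starWf a))
  rw [coeff_starWf, coeff_starWf]
  rw [moyalP_swap p.1 (starW0 (PowerSeries.coeff q.2 b))
      (starW0 (PowerSeries.coeff q.1 a))]
  rw [smul_smul, conj_weyl_scalar]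

lemma coeff_starSeries {A : Type*} [Semiring A] [Star A] (ℓ : ℕ) (F : PowerSeries A) :
    PowerSeries.coeff ℓ (starSeries F) = star (PowerSeries.coeff ℓ F) :=
  PowerSeries.coeff_mk _ _

lemma starSeries_C {A : Type*} [CommRing A] [StarRing A] (f : A) :
    starSeries (PowerSeries.C f) = PowerSeries.C (star f) := by
  refine PowerSeries.ext fun ℓ => ?_
  rw [coeff_starSeries, PowerSeries.coeff_C, PowerSeries.coeff_C]
  split <;> simp

lemma coeff_starMulC_CC {A : Type*} [CommRing A] (C : ℕ → A → A → A)
    (h0l : ∀ r g, C r 0 g = 0) (h0r : ∀ r f, C r f 0 = 0) (r : ℕ) (f g : A) :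
    PowerSeries.coeff r (starMulC C (PowerSeries.C f) (PowerSeries.C g)) = C r f g := by
  rw [starMulC, PowerSeries.coeff_mk]
  rw [Finset.sum_eq_single (r, 0)]
  · simp [PowerSeries.coeff_C]
  · intro p hp hne
    apply Finset.sum_eq_zero
    intro q hq
    have hpr := Finset.HasAntidiagonal.mem_antidiagonal.mp hp
    have hq' := Finset.HasAntidiagonal.mem_antidiagonal.mp hq
    have hp2 : p.2 ≠ 0 := by
      intro h
      exact hne (Prod.ext (by omega) h)
    by_cases h1 : q.1 = 0
    · have h2 : q.2 ≠ 0 := by omega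
      simp [PowerSeries.coeff_C, h2, h0r]
    · simp [PowerSeries.coeff_C, h1, h0l]
  · intro h
    exact absurd (Finset.HasAntidiagonal.mem_antidiagonal.mpr (by simp)) h

lemma star_C_eq {C : ℕ → Cinf n → Cinf n → Cinf n} (hC : IsStarProduct (Cinf n) C)
    (hherm : IsHermitianSP C) (r : ℕ) (f g : Cinf n) :
    star (C r f g) = C r (star g) (star f) := by
  have h0l : ∀ r g, C r 0 g = (0 : Cinf n) := fun r g => by
    have := hC.smul_left r 0 g g
    simpa using this
  have h0r : ∀ r f, C r f 0 = (0 : Cinf n) := fun r f => by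
    have := hC.smul_right r 0 f f
    simpa using this
  have h := hherm (PowerSeries.C f) (PowerSeries.C g)
  have h2 := congrArg (PowerSeries.coeff r) h
  rw [starSeries_C, starSeries_C, coeff_starMulC_CC C h0l h0r, coeff_starSeries,
    coeff_starMulC_CC C h0l h0r] at h2
  exact h2

end RkAux
/-- If `⋆` is a Hermitian star product, `τ₀ = π*` and
`τ₁,…,τ_{k−1} ∈ HC¹` satisfy `τ_i* = τ_i` (where `φ*(f) = conj(φ(conj f))`), then the
cochain `R_k` is Hermitian: `R_k*(f,g) = conj(R_k(conj g, conj f)) = R_k(f,g)`. -/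
theorem Rk_hermitian {n : ℕ} (C : ℕ → Cinf n → Cinf n → Cinf n)
    (hC : IsStarProduct (Cinf n) C) (hherm : IsHermitianSP C)
    (k : ℕ) (hk : 1 ≤ k) (τ : ℕ → Cinf n → Wf n)
    (hτ0 : τ 0 = piW)
    (hτ : ∀ i, i < k → IsHC1 (τ i))
    (hτstar : ∀ i, i < k → ∀ f : Cinf n, starWf (τ i (star f)) = τ i f) :
    ∀ f g : Cinf n, starWf (Rcochain C τ k (star g) (star f)) = Rcochain C τ k f g := by
  intro f g
  classical
  unfold Rcochain
  rw [RkAux.sWf_sub, RkAux.sWf_sum, RkAux.sWf_sum]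
  refine congrArg₂ (· - ·) ?_ ?_
  · refine Finset.sum_congr rfl fun i hi => ?_
    have hi' : i < k := Finset.mem_range.mp hi
    rw [RkAux.sWf_lamSmul_X_pow, ← RkAux.star_C_eq hC hherm (k - i) f g,
      hτstar i hi' (C (k - i) f g)]
  · have step1 : ∀ i ∈ Finset.Ioo 0 k,
        starWf (weylMul (τ i (star g)) (τ (k - i) (star f)))
          = weylMul (τ (k - i) f) (τ i g) := by
      intro i hi
      obtain ⟨hi0, hik⟩ := Finset.mem_Ioo.mp hi
      rw [RkAux.sWf_weylMul, hτstar (k - i) (by omega) f, hτstar i hik g]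
    rw [Finset.sum_congr rfl step1]
    refine Finset.sum_nbij' (i := fun i => k - i) (j := fun i => k - i) ?_ ?_ ?_ ?_ ?_
    · intro i hi
      obtain ⟨hi0, hik⟩ := Finset.mem_Ioo.mp hi
      show k - i ∈ Finset.Ioo 0 k
      exact Finset.mem_Ioo.mpr ⟨by omega, by omega⟩
    · intro i hi
      obtain ⟨hi0, hik⟩ := Finset.mem_Ioo.mp hi
      show k - i ∈ Finset.Ioo 0 k
      exact Finset.mem_Ioo.mpr ⟨by omega, by omega⟩
    · intro i hi
      obtain ⟨hi0, hik⟩ := Finset.mem_Ioo.mp hi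
      show k - (k - i) = i
      omega
    · intro i hi
      obtain ⟨hi0, hik⟩ := Finset.mem_Ioo.mp hi
      show k - (k - i) = i
      omega
    · intro i hi
      obtain ⟨hi0, hik⟩ := Finset.mem_Ioo.mp hi
      show weylMul (τ (k - i) f) (τ i g) = weylMul (τ (k - i) f) (τ (k - (k - i)) g)
      rw [Nat.sub_sub_self hik.le]
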